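/- Let ν ∈ ℝⁿ be an eigenvector of A with νᵀ·X^{(0)} = 0. Then for every choice of weight matrices W₁^{(t)}, W₂^{(t)} and every t ≥ 0, νᵀ·X^{(t)} = 0; that is, signal components not present in the initial features can never be created by the residual GNN. -/
import Mathlib


open Matrix

private lemma vecMul_smul_mat {n k : ℕ} (v : Fin n → ℝ) (a : ℝ)
    (M : Matrix (Fin n) (Fin k) ℝ) : v ᵥ* (a • M) = a • (v ᵥ* M) := by
  ext j
  simp [Matrix.vecMul, dotProduct, Finset.mul_sum, mul_left_comm]

/-- For the linear residual GNN
`X^{(t+1)} = (1−α)·A·X^{(t)}·W₁^{(t)} + α·X^{(0)}·W₂^{(t)}`: if `ν` is an eigenvector of `A`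
with `νᵀ·X^{(0)} = 0`, then for every choice of weights and every `t`, `νᵀ·X^{(t)} = 0`. -/
theorem stmt_4 {n k : ℕ}
    (A : Matrix (Fin n) (Fin n) ℝ) (hA : A.IsSymm)
    (α : ℝ) (hα : α ∈ Set.Ioo (0 : ℝ) 1)
    (X0 : Matrix (Fin n) (Fin k) ℝ)
    (ν : Fin n → ℝ) (hν : ν ≠ 0) (lam : ℝ)
    (heig : A *ᵥ ν = lam • ν)
    (h0 : ν ᵥ* X0 = 0) :
    ∀ (W₁ W₂ : ℕ → Matrix (Fin k) (Fin k) ℝ)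
      (X : ℕ → Matrix (Fin n) (Fin k) ℝ),
      X 0 = X0 →
      (∀ t, X (t + 1) = (1 - α) • (A * X t * W₁ t) + α • (X0 * W₂ t)) →
      ∀ t, ν ᵥ* X t = 0 := by
  intro W₁ W₂ X hX0 hrec t
  induction t with
  | zero => rw [hX0, h0]
  | succ t ih =>
    have hνA : ν ᵥ* A = lam • ν := by
      rw [← heig, ← hA.eq]; ext j
      simp [vecMul, mulVec, dotProduct, Matrix.transpose_apply, mul_comm, hA.apply]
    have e1 : ν ᵥ* (A * X t) = 0 := by
      rw [← Matrix.vecMul_vecMul, hνA]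
      ext j; simp [Matrix.vecMul, dotProduct]
      have := congrFun ih j; simp [Matrix.vecMul, dotProduct] at this
      calc ∑ x, lam * ν x * X t x j = lam * ∑ x, ν x * X t x j := by
            rw [Finset.mul_sum]
            exact Finset.sum_congr rfl fun x _ => by ring
        _ = 0 := by rw [this, mul_zero]
    rw [hrec t, vecMul_add]
    have e2 : ν ᵥ* ((1 - α) • (A * X t * W₁ t)) = 0 := by
      rw [vecMul_smul_mat, ← Matrix.vecMul_vecMul, e1]
      simp
    have e3 : ν ᵥ* (α • (X0 * W₂ t)) = 0 := by
      rw [vecMul_smul_mat, ← Matrix.vecMul_vecMul, h0]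
      simp
    rw [e2, e3, add_zero]
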